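/- Fix a positive integer k and ε > 0. Then ∑_{j_k ≥ N} ∑_{(j_1,...,j_{k-1}) ∈ ℕ₊^{k-1}} 1/(j_1 · ... · j_k · (j_1² + ... + j_k²)) = O(N^{ε-2}) as N → ∞; i.e., there is a constant C such that for all N ≥ 2 the tail sum is at most C · N^{ε-2}. -/

import Mathlib

open Real Finset

private lemma aux_key (m : ℕ) (δ e : ℝ) (hδ : 0 < δ) (he : δ * (2 * m + 1) ≤ e) (he2 : e ≤ 2)
    (Nr x : ℝ) (hN : 1 ≤ Nr) (hx : Nr ≤ x) (y : Fin m → ℝ) (hy : ∀ i, 1 ≤ y i) :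
    1 / (x * (∏ i, y i) * (x ^ 2 + ∑ i, y i ^ 2)) ≤
      x ^ (-(1 + δ)) * (Nr ^ (e - 2) * ∏ i, y i ^ (-(1 + 2 * δ))) := by
  have hx1 : (1:ℝ) ≤ x := le_trans hN hx
  have hx0 : (0:ℝ) < x := lt_of_lt_of_le one_pos hx1
  have hN0 : (0:ℝ) < Nr := lt_of_lt_of_le one_pos hN
  have hy0 : ∀ i, (0:ℝ) < y i := fun i => lt_of_lt_of_le one_pos (hy i)
  set S : ℝ := ∑ i, y i ^ 2 with hSdef
  have hS0 : (0:ℝ) ≤ S := Finset.sum_nonneg fun i _ => sq_nonneg _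
  set T : ℝ := x ^ 2 + S with hTdef
  have hT0 : (0:ℝ) < T := by positivity
  have hxT : x ^ 2 ≤ T := by simp [hTdef, hS0]
  have hmδ : 2 * (m * δ) + δ = δ * (2 * m + 1) := by ring
  have hη2 : 2 * (m * δ) + δ ≤ e := by rw [hmδ]; exact he
  have hη1 : m * δ ≤ 1 := by nlinarith
  -- step 1
  have step1 : ∀ i, y i ^ (2 * δ) ≤ T ^ δ := by
    intro i
    have h1 : y i ^ 2 ≤ T := by
      have : y i ^ 2 ≤ S := Finset.single_le_sum (f := fun i => y i ^ 2)
        (fun i _ => sq_nonneg _) (Finset.mem_univ i)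
      nlinarith [sq_nonneg x]
    have h2 : y i ^ (2 * δ) = (y i ^ 2) ^ δ := by
      rw [← Real.rpow_natCast (y i) 2, ← Real.rpow_mul (hy0 i).le]
      norm_num
    rw [h2]
    exact Real.rpow_le_rpow (sq_nonneg _) h1 hδ.le
  -- step 2
  have step2 : ∏ i, y i ^ (2 * δ) ≤ T ^ (m * δ) := by
    calc ∏ i, y i ^ (2 * δ) ≤ ∏ _i : Fin m, T ^ δ :=
          Finset.prod_le_prod (fun i _ => (Real.rpow_nonneg (hy0 i).le _)) (fun i _ => step1 i)
      _ = (T ^ δ) ^ (m : ℕ) := by rw [Finset.prod_const, Finset.card_univ, Fintype.card_fin]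
      _ = T ^ (m * δ) := by
          rw [← Real.rpow_natCast (T ^ δ) m, ← Real.rpow_mul hT0.le, mul_comm]
  -- step 3
  have step3 : x ^ (2 - 2 * (m * δ)) ≤ T ^ (1 - m * δ) := by
    have h2 : x ^ (2 - 2 * (m * δ)) = (x ^ 2) ^ (1 - m * δ) := by
      rw [← Real.rpow_natCast x 2, ← Real.rpow_mul hx0.le]
      norm_num [mul_sub]
    rw [h2]
    exact Real.rpow_le_rpow (sq_nonneg _) hxT (by linarith)
  have combine : x ^ (2 - 2 * (m * δ)) * ∏ i, y i ^ (2 * δ) ≤ T := by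
    calc x ^ (2 - 2 * (m * δ)) * ∏ i, y i ^ (2 * δ)
        ≤ T ^ (1 - m * δ) * T ^ (m * δ) := by
          apply mul_le_mul step3 step2
            (Finset.prod_nonneg fun i _ => Real.rpow_nonneg (hy0 i).le _)
            (Real.rpow_nonneg hT0.le _)
      _ = T := by rw [← Real.rpow_add hT0]; norm_num
  -- denominator bound
  have hPpos : (0:ℝ) < ∏ i, y i := Finset.prod_pos fun i _ => hy0 i
  have hR : x ^ (1 + δ) * Nr ^ (2 - e) * ∏ i, y i ^ (1 + 2 * δ) ≤ x * (∏ i, y i) * T := by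
    have e1 : x * (∏ i, y i) * (x ^ (2 - 2 * (m * δ)) * ∏ i, y i ^ (2 * δ))
        = x ^ (3 - 2 * (m * δ)) * ∏ i, y i ^ (1 + 2 * δ) := by
      have ex : x * x ^ (2 - 2 * (m * δ)) = x ^ (3 - 2 * (m * δ)) := by
        rw [show (3:ℝ) - 2 * (m * δ) = 1 + (2 - 2 * (m * δ)) by ring,
          Real.rpow_add hx0, Real.rpow_one]
      have ey : (∏ i, y i) * ∏ i, y i ^ (2 * δ) = ∏ i, y i ^ (1 + 2 * δ) := by
        rw [← Finset.prod_mul_distrib]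
        exact Finset.prod_congr rfl fun i _ => by
          rw [Real.rpow_add (hy0 i), Real.rpow_one]
      calc x * (∏ i, y i) * (x ^ (2 - 2 * (m * δ)) * ∏ i, y i ^ (2 * δ))
          = (x * x ^ (2 - 2 * (m * δ))) * ((∏ i, y i) * ∏ i, y i ^ (2 * δ)) := by ring
        _ = x ^ (3 - 2 * (m * δ)) * ∏ i, y i ^ (1 + 2 * δ) := by rw [ex, ey]
    have e2 : x ^ (1 + δ) * Nr ^ (2 - e) ≤ x ^ (3 - 2 * (m * δ)) := by
      have e3 : x ^ (3 - 2 * (m * δ)) = x ^ (1 + δ) * x ^ (2 - 2 * (m * δ) - δ) := by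
        rw [← Real.rpow_add hx0]; ring_nf
      rw [e3]
      apply mul_le_mul_of_nonneg_left _ (Real.rpow_nonneg hx0.le _)
      calc Nr ^ (2 - e) ≤ Nr ^ (2 - 2 * (m * δ) - δ) :=
            Real.rpow_le_rpow_of_exponent_le hN (by linarith)
        _ ≤ x ^ (2 - 2 * (m * δ) - δ) :=
            Real.rpow_le_rpow hN0.le hx (by linarith)
    calc x ^ (1 + δ) * Nr ^ (2 - e) * ∏ i, y i ^ (1 + 2 * δ)
        ≤ x ^ (3 - 2 * (m * δ)) * ∏ i, y i ^ (1 + 2 * δ) := by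
          apply mul_le_mul_of_nonneg_right e2
            (Finset.prod_nonneg fun i _ => Real.rpow_nonneg (hy0 i).le _)
      _ = x * (∏ i, y i) * (x ^ (2 - 2 * (m * δ)) * ∏ i, y i ^ (2 * δ)) := e1.symm
      _ ≤ x * (∏ i, y i) * T := by
          apply mul_le_mul_of_nonneg_left combine (by positivity)
  have hRpos : (0:ℝ) < x ^ (1 + δ) * Nr ^ (2 - e) * ∏ i, y i ^ (1 + 2 * δ) := by
    apply mul_pos (mul_pos (Real.rpow_pos_of_pos hx0 _) (Real.rpow_pos_of_pos hN0 _))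
    exact Finset.prod_pos fun i _ => Real.rpow_pos_of_pos (hy0 i) _
  have final := one_div_le_one_div_of_le hRpos hR
  refine le_trans final (le_of_eq ?_)
  have ep : ∏ i, y i ^ (-(1 + 2 * δ)) = (∏ i, y i ^ (1 + 2 * δ))⁻¹ := by
    rw [← Finset.prod_inv_distrib]
    exact Finset.prod_congr rfl fun i _ => Real.rpow_neg (hy0 i).le _
  rw [ep, Real.rpow_neg hx0.le, show e - 2 = -(2 - e) by ring, Real.rpow_neg hN0.le]
  rw [one_div, mul_inv, mul_inv, mul_assoc]

private lemma aux_pi (g : ℕ+ → ℝ) (hg0 : ∀ n, 0 ≤ g n) (hg : Summable g) :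
    ∀ m : ℕ, Summable (fun j : Fin m → ℕ+ => ∏ i, g (j i)) ∧
      (∑' j : Fin m → ℕ+, ∏ i, g (j i)) = (∑' n, g n) ^ m := by
  intro m
  induction m with
  | zero =>
    have hs : HasSum (fun j : Fin 0 → ℕ+ => ∏ i, g (j i)) 1 := by
      have h := hasSum_single (f := fun j : Fin 0 → ℕ+ => ∏ i, g (j i)) default
        (fun b hb => absurd (Subsingleton.elim b default) hb)
      simpa using h
    exact ⟨hs.summable, by rw [hs.tsum_eq, pow_zero]⟩
  | succ m ih =>
    obtain ⟨ihs, iht⟩ := ih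
    have hF : Summable (fun p : ℕ+ × (Fin m → ℕ+) => g p.1 * ∏ i, g (p.2 i)) :=
      Summable.mul_of_nonneg (f := g) (g := fun j : Fin m → ℕ+ => ∏ i, g (j i))
        hg ihs (fun n => hg0 n) (fun j => Finset.prod_nonneg fun i _ => hg0 _)
    set F : ℕ+ × (Fin m → ℕ+) → ℝ := fun p => g p.1 * ∏ i, g (p.2 i) with hFdef
    have he : ∀ j : Fin (m+1) → ℕ+, (∏ i, g (j i)) = F ((Fin.consEquiv (fun _ : Fin (m+1) => ℕ+)).symm j) := by
      intro j
      simp only [hFdef, Fin.consEquiv, Equiv.coe_fn_symm_mk, Fin.prod_univ_succ]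
      rfl
    have hsum : Summable (fun j : Fin (m+1) → ℕ+ => ∏ i, g (j i)) := by
      have := hF.comp_injective (Fin.consEquiv (fun _ : Fin (m+1) => ℕ+)).symm.injective
      refine this.congr fun j => (he j).symm
    refine ⟨hsum, ?_⟩
    have h1 : (∑' j : Fin (m+1) → ℕ+, ∏ i, g (j i)) = ∑' p, F p := by
      rw [tsum_congr he]
      exact (Fin.consEquiv (fun _ : Fin (m+1) => ℕ+)).symm.tsum_eq F
    rw [h1, hF.tsum_prod' (fun a => (ihs.mul_left (g a)))]
    have h2 : ∀ a : ℕ+, (∑' j : Fin m → ℕ+, F (a, j)) = g a * (∑' n, g n) ^ m := by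
      intro a
      have hFa : (fun j : Fin m → ℕ+ => F (a, j)) = fun j => g a * ∏ i, g (j i) := rfl
      rw [hFa, tsum_mul_left, iht]
    rw [tsum_congr h2, tsum_mul_right, pow_succ, mul_comm]

set_option maxHeartbeats 1000000 in
theorem stmt_2 (k : ℕ) (hk : 0 < k) (ε : ℝ) (hε : 0 < ε) :
    ∃ C : ℝ, ∀ N : ℕ, 2 ≤ N →
      (∑' (jk : {n : ℕ // N ≤ n}) (j : Fin (k - 1) → ℕ+),
        1 / (((jk : ℕ) : ℝ) * (∏ i, ((j i : ℕ) : ℝ)) *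
          (((jk : ℕ) : ℝ) ^ 2 + ∑ i, ((j i : ℕ) : ℝ) ^ 2))) ≤
      C * (N : ℝ) ^ (ε - 2) := by
  set ε' := min ε 1 with hε'def
  have hε'pos : 0 < ε' := lt_min hε one_pos
  have hε'le1 : ε' ≤ 1 := min_le_right _ _
  have hε'leε : ε' ≤ ε := min_le_left _ _
  set δ := ε' / (3 * ((k - 1 : ℕ) + 1)) with hδdef
  have hδpos : 0 < δ := by positivity
  have hkey : δ * (2 * ((k - 1 : ℕ) : ℝ) + 1) ≤ ε' := by
    rw [hδdef, div_mul_eq_mul_div, div_le_iff₀ (by positivity)]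
    nlinarith [Nat.cast_nonneg (α := ℝ) (k - 1), hε'pos.le]
  have hp : Summable (fun n : ℕ => (n : ℝ) ^ (-(1 + 2 * δ))) :=
    Real.summable_nat_rpow.2 (by linarith)
  have hq : Summable (fun n : ℕ => (n : ℝ) ^ (-(1 + δ))) :=
    Real.summable_nat_rpow.2 (by linarith)
  set g : ℕ+ → ℝ := fun n => ((n : ℕ) : ℝ) ^ (-(1 + 2 * δ)) with hgdef
  have hgsum : Summable g := hp.comp_injective PNat.coe_injective
  have hg0 : ∀ n, 0 ≤ g n := fun n => Real.rpow_nonneg (Nat.cast_nonneg _) _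
  obtain ⟨hGsum, hGt⟩ := aux_pi g hg0 hgsum (k - 1)
  set Z := ∑' n : ℕ+, g n with hZ
  have hZ0 : 0 ≤ Z := tsum_nonneg hg0
  set Z' := ∑' n : ℕ, (n : ℝ) ^ (-(1 + δ)) with hZ'
  have hZ'0 : 0 ≤ Z' := tsum_nonneg fun n => Real.rpow_nonneg (Nat.cast_nonneg _) _
  refine ⟨Z' * Z ^ (k - 1), ?_⟩
  intro N hN
  have hNr : (2 : ℝ) ≤ (N : ℝ) := by exact_mod_cast hN
  have hNr1 : (1 : ℝ) ≤ (N : ℝ) := by linarith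
  set K := (N : ℝ) ^ (ε' - 2) * Z ^ (k - 1) with hK
  have hK0 : 0 ≤ K := mul_nonneg (Real.rpow_nonneg (by positivity) _) (pow_nonneg hZ0 _)
  have hqsub : Summable (fun jk : {n : ℕ // N ≤ n} => (((jk : ℕ) : ℝ)) ^ (-(1 + δ))) :=
    hq.comp_injective Subtype.val_injective
  have houter_sum : Summable (fun jk : {n : ℕ // N ≤ n} =>
      (((jk : ℕ) : ℝ)) ^ (-(1 + δ)) * K) := hqsub.mul_right K
  have hinner : ∀ jk : {n : ℕ // N ≤ n},
      (∑' j : Fin (k - 1) → ℕ+,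
        1 / (((jk : ℕ) : ℝ) * (∏ i, ((j i : ℕ) : ℝ)) *
          (((jk : ℕ) : ℝ) ^ 2 + ∑ i, ((j i : ℕ) : ℝ) ^ 2))) ≤
      (((jk : ℕ) : ℝ)) ^ (-(1 + δ)) * K := by
    intro jk
    set x : ℝ := ((jk : ℕ) : ℝ) with hxdef
    have hxN : (N : ℝ) ≤ x := by rw [hxdef]; exact_mod_cast jk.2
    set c : ℝ := x ^ (-(1 + δ)) * (N : ℝ) ^ (ε' - 2) with hc
    have hle : ∀ j : Fin (k - 1) → ℕ+,
        1 / (x * (∏ i, ((j i : ℕ) : ℝ)) * (x ^ 2 + ∑ i, ((j i : ℕ) : ℝ) ^ 2)) ≤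
        c * ∏ i, g (j i) := by
      intro j
      have hy : ∀ i, (1 : ℝ) ≤ ((j i : ℕ) : ℝ) := fun i => by
        exact_mod_cast (j i).property
      have := aux_key (k - 1) δ ε' hδpos hkey (by linarith) (N : ℝ) x hNr1 hxN
        (fun i => ((j i : ℕ) : ℝ)) hy
      calc 1 / (x * (∏ i, ((j i : ℕ) : ℝ)) * (x ^ 2 + ∑ i, ((j i : ℕ) : ℝ) ^ 2))
          ≤ x ^ (-(1 + δ)) * ((N : ℝ) ^ (ε' - 2) * ∏ i, ((j i : ℕ) : ℝ) ^ (-(1 + 2 * δ))) :=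
            this
        _ = c * ∏ i, g (j i) := by rw [hc]; ring
    have hf0 : ∀ j : Fin (k - 1) → ℕ+,
        0 ≤ 1 / (x * (∏ i, ((j i : ℕ) : ℝ)) * (x ^ 2 + ∑ i, ((j i : ℕ) : ℝ) ^ 2)) := by
      intro j
      have hx0' : (0:ℝ) ≤ x := by rw [hxdef]; positivity
      positivity
    have hBsum : Summable (fun j : Fin (k - 1) → ℕ+ => c * ∏ i, g (j i)) := hGsum.mul_left c
    have hfsum : Summable (fun j : Fin (k - 1) → ℕ+ =>
        1 / (x * (∏ i, ((j i : ℕ) : ℝ)) * (x ^ 2 + ∑ i, ((j i : ℕ) : ℝ) ^ 2))) :=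
      Summable.of_nonneg_of_le hf0 hle hBsum
    calc (∑' j : Fin (k - 1) → ℕ+,
        1 / (x * (∏ i, ((j i : ℕ) : ℝ)) * (x ^ 2 + ∑ i, ((j i : ℕ) : ℝ) ^ 2)))
        ≤ ∑' j : Fin (k - 1) → ℕ+, c * ∏ i, g (j i) := hfsum.tsum_le_tsum hle hBsum
      _ = c * Z ^ (k - 1) := by rw [tsum_mul_left, hGt]
      _ = x ^ (-(1 + δ)) * K := by rw [hc, hK]; ring
  have hL0 : ∀ jk : {n : ℕ // N ≤ n}, 0 ≤ ∑' j : Fin (k - 1) → ℕ+,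
      1 / (((jk : ℕ) : ℝ) * (∏ i, ((j i : ℕ) : ℝ)) *
        (((jk : ℕ) : ℝ) ^ 2 + ∑ i, ((j i : ℕ) : ℝ) ^ 2)) := by
    intro jk
    refine tsum_nonneg fun j => ?_
    have : (0:ℝ) ≤ ((jk : ℕ) : ℝ) := Nat.cast_nonneg _
    positivity
  have hLsum : Summable (fun jk : {n : ℕ // N ≤ n} => ∑' j : Fin (k - 1) → ℕ+,
      1 / (((jk : ℕ) : ℝ) * (∏ i, ((j i : ℕ) : ℝ)) *
        (((jk : ℕ) : ℝ) ^ 2 + ∑ i, ((j i : ℕ) : ℝ) ^ 2))) :=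
    Summable.of_nonneg_of_le hL0 hinner houter_sum
  have hsub_le : (∑' jk : {n : ℕ // N ≤ n}, (((jk : ℕ) : ℝ)) ^ (-(1 + δ))) ≤ Z' := by
    rw [hZ']
    exact hqsub.tsum_le_tsum_of_inj Subtype.val Subtype.val_injective
      (fun c _ => Real.rpow_nonneg (Nat.cast_nonneg _) _) (fun b => le_rfl) hq
  calc (∑' (jk : {n : ℕ // N ≤ n}) (j : Fin (k - 1) → ℕ+),
        1 / (((jk : ℕ) : ℝ) * (∏ i, ((j i : ℕ) : ℝ)) *
          (((jk : ℕ) : ℝ) ^ 2 + ∑ i, ((j i : ℕ) : ℝ) ^ 2)))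
      ≤ ∑' jk : {n : ℕ // N ≤ n}, (((jk : ℕ) : ℝ)) ^ (-(1 + δ)) * K :=
        hLsum.tsum_le_tsum hinner houter_sum
    _ = (∑' jk : {n : ℕ // N ≤ n}, (((jk : ℕ) : ℝ)) ^ (-(1 + δ))) * K := tsum_mul_right
    _ ≤ Z' * K := mul_le_mul_of_nonneg_right hsub_le hK0
    _ = (Z' * Z ^ (k - 1)) * (N : ℝ) ^ (ε' - 2) := by rw [hK]; ring
    _ ≤ (Z' * Z ^ (k - 1)) * (N : ℝ) ^ (ε - 2) := by
        apply mul_le_mul_of_nonneg_left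
          (Real.rpow_le_rpow_of_exponent_le hNr1 (by linarith))
          (mul_nonneg hZ'0 (pow_nonneg hZ0 _))
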